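/- Let φ ∈ gl(2,ℝ) have two complex conjugate (nonreal) eigenvalues λ = r − is and λ̄ with s ≠ 0. Then the 4-dimensional Lie algebra ℝ[φ] ⋉ ℝ² is isomorphic to the real Lie algebra aff(ℂ) of affine motions of the complex line, i.e., the Lie algebra with basis (X₁,X₂,X₃,X₄) and nonzero brackets [X₁,X₃]=X₃, [X₁,X₄]=X₄, [X₂,X₃]=X₄, [X₂,X₄]=−X₃. -/

import Mathlib

set_option synthInstance.maxHeartbeats 1000000
set_option maxHeartbeats 1000000
set_option maxRecDepth 8000

open Polynomial

/-- If `φ ∈ gl(2,ℝ)` has two complex conjugate (nonreal) eigenvalues `r ± is`, `s ≠ 0`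
(equivalently its characteristic polynomial is `(X-r)² + s²`), then `ℝ[φ] ⋉ ℝ²` is
isomorphic as a Lie algebra to `aff(ℂ)`, with basis `(X₁,X₂,X₃,X₄)` and nonzero brackets
`[X₁,X₃]=X₃, [X₁,X₄]=X₄, [X₂,X₃]=X₄, [X₂,X₄]=-X₃`. -/
theorem stmt14 (φ : Matrix (Fin 2) (Fin 2) ℝ) (r s : ℝ) (hs : s ≠ 0)
    (hchar : φ.charpoly = (X - C r) ^ 2 + C (s ^ 2)) :
    ∃ e : ((Algebra.adjoin ℝ {φ} : Subalgebra ℝ (Matrix (Fin 2) (Fin 2) ℝ)) ×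
        (Fin 2 → ℝ)) ≃ₗ[ℝ] (Fin 4 → ℝ),
      ∀ u v : (Algebra.adjoin ℝ {φ} : Subalgebra ℝ (Matrix (Fin 2) (Fin 2) ℝ)) × (Fin 2 → ℝ),
        e (0, (u.1 : Matrix (Fin 2) (Fin 2) ℝ).mulVec v.2 -
            (v.1 : Matrix (Fin 2) (Fin 2) ℝ).mulVec u.2) =
          ![0, 0,
            e u 0 * e v 2 - e u 2 * e v 0 - (e u 1 * e v 3 - e u 3 * e v 1),
            e u 0 * e v 3 - e u 3 * e v 0 + (e u 1 * e v 2 - e u 2 * e v 1)] := by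
  -- Cayley–Hamilton: (φ - r)² + s² = 0
  have hCH : (φ - algebraMap ℝ (Matrix (Fin 2) (Fin 2) ℝ) r) ^ 2
      + algebraMap ℝ (Matrix (Fin 2) (Fin 2) ℝ) (s ^ 2) = 0 := by
    have h := φ.aeval_self_charpoly
    rw [hchar] at h
    simpa using h
  have hE : ∀ i j : Fin 2, ((φ - algebraMap ℝ (Matrix (Fin 2) (Fin 2) ℝ) r) ^ 2
      + algebraMap ℝ (Matrix (Fin 2) (Fin 2) ℝ) (s ^ 2)) i j = 0 := by
    intro i j; rw [hCH]; rfl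
  have h00 := hE 0 0
  have h10 := hE 1 0
  simp only [sq, Matrix.add_apply, Matrix.mul_apply, Fin.sum_univ_two, Matrix.sub_apply,
    Matrix.algebraMap_matrix_apply, Algebra.algebraMap_self_apply] at h00 h10
  norm_num at h00 h10
  -- h00 : (φ 0 0 - r) * (φ 0 0 - r) + φ 0 1 * (φ 1 0 - 0) + s^2 = 0 (roughly)
  have hm : φ 1 0 ≠ 0 := by
    intro h
    rw [h] at h00
    nlinarith [sq_nonneg (φ 0 0 - r), mul_self_pos.mpr hs]
  have htr : φ 0 0 + φ 1 1 = 2 * r := by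
    have h : φ 1 0 * (φ 0 0 + φ 1 1 - 2 * r) = 0 := by linear_combination h10
    rcases mul_eq_zero.mp h with h | h
    · exact absurd h hm
    · linarith
  have hq : φ 0 1 = (φ 0 0 * (2 * r - φ 0 0) - r ^ 2 - s ^ 2) / φ 1 0 := by
    field_simp
    linear_combination h00
  have hn : φ 1 1 = 2 * r - φ 0 0 := by linarith
  -- The linear map F : ℝ⁴ → ℝ[φ] × ℝ²
  have hΦ : φ ∈ Algebra.adjoin ℝ ({φ} : Set (Matrix (Fin 2) (Fin 2) ℝ)) :=
    Algebra.self_mem_adjoin_singleton ℝ φ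
  have hmemf : ∀ x : Fin 4 → ℝ,
      (x 0 - r * x 1 / s) • (1 : Matrix (Fin 2) (Fin 2) ℝ) + (x 1 / s) • φ ∈ Algebra.adjoin ℝ ({φ} : Set (Matrix (Fin 2) (Fin 2) ℝ)) :=
    fun x => add_mem (Subalgebra.smul_mem _ (one_mem _) _) (Subalgebra.smul_mem _ hΦ _)
  set f : (Fin 4 → ℝ) → ((Algebra.adjoin ℝ {φ} : Subalgebra ℝ (Matrix (Fin 2) (Fin 2) ℝ)) × (Fin 2 → ℝ)) := fun x =>
    (⟨(x 0 - r * x 1 / s) • (1 : Matrix (Fin 2) (Fin 2) ℝ) + (x 1 / s) • φ, hmemf x⟩,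
     ![x 2 + x 3 * ((φ 0 0 - r) / s), x 3 * (φ 1 0 / s)]) with hf
  have Fadd : ∀ x y : Fin 4 → ℝ, f (x + y) = f x + f y := by
    intro x y
    refine Prod.ext (Subtype.ext ?_) ?_
    · show _ = ((_ : Matrix (Fin 2) (Fin 2) ℝ) + _)
      simp only [hf, Pi.add_apply]
      module
    · funext i
      fin_cases i <;> simp [hf] <;> ring
  have Fsmul : ∀ (c : ℝ) (x : Fin 4 → ℝ), f (c • x) = c • f x := by
    intro c x
    refine Prod.ext (Subtype.ext ?_) ?_
    · show _ = c • ((_ : Matrix (Fin 2) (Fin 2) ℝ))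
      simp only [hf, Pi.smul_apply, smul_eq_mul]
      module
    · funext i
      fin_cases i <;> simp [hf] <;> ring
  set F : (Fin 4 → ℝ) →ₗ[ℝ] ((Algebra.adjoin ℝ {φ} : Subalgebra ℝ (Matrix (Fin 2) (Fin 2) ℝ)) × (Fin 2 → ℝ)) :=
    { toFun := f, map_add' := Fadd, map_smul' := Fsmul } with hFdef
  have hFapp : ∀ x, F x = f x := fun _ => rfl
  -- injectivity
  have hinj : Function.Injective F := by
    rw [← LinearMap.ker_eq_bot, LinearMap.ker_eq_bot']
    intro x hx
    rw [hFapp] at hx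
    have h1 : ((x 0 - r * x 1 / s) • (1 : Matrix (Fin 2) (Fin 2) ℝ) + (x 1 / s) • φ)
        = 0 := by
      have := congrArg (fun z => (z.1 : Matrix (Fin 2) (Fin 2) ℝ)) hx
      simpa [hf] using this
    have h2 : (![x 2 + x 3 * ((φ 0 0 - r) / s), x 3 * (φ 1 0 / s)] : Fin 2 → ℝ)
        = 0 := congrArg Prod.snd hx
    have e10 : (x 1 / s) * φ 1 0 = 0 := by
      have := congrFun (congrFun h1 1) 0
      simpa [Matrix.one_apply] using this
    have hx1 : x 1 = 0 := by
      rcases mul_eq_zero.mp e10 with h | h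
      · field_simp at h; simpa using h
      · exact absurd h hm
    have hx0 : x 0 = 0 := by
      have := congrFun (congrFun h1 0) 0
      simp [Matrix.one_apply, hx1] at this
      exact this
    have e1 : x 3 * (φ 1 0 / s) = 0 := congrFun h2 1
    have hx3 : x 3 = 0 := by
      rcases mul_eq_zero.mp e1 with h | h
      · exact h
      · exact absurd h (div_ne_zero hm hs)
    have hx2 : x 2 = 0 := by
      have := congrFun h2 0
      simp [hx3] at this
      exact this
    funext i
    fin_cases i <;> simp [hx0, hx1, hx2, hx3]
  -- surjectivity
  have hsurj : Function.Surjective F := by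
    rintro ⟨a, w⟩
    obtain ⟨P, hP⟩ : ∃ P : ℝ[X], aeval φ P = (a : Matrix (Fin 2) (Fin 2) ℝ) := by
      have h3 : (a : Matrix (Fin 2) (Fin 2) ℝ) ∈ Algebra.adjoin ℝ {φ} := a.2
      have h4 : (a : Matrix (Fin 2) (Fin 2) ℝ) ∈ (aeval (R := ℝ) φ).range := by
        rw [← Algebra.adjoin_singleton_eq_range_aeval]; exact h3
      rwa [AlgHom.mem_range] at h4
    set Q := P %ₘ φ.charpoly with hQ
    have hdim : φ.charpoly.natDegree = 2 := by
      simp [Matrix.charpoly_natDegree_eq_dim]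
    have hne1 : φ.charpoly ≠ 1 := by
      intro h; rw [h] at hdim; simp at hdim
    have hdegQ : Q.natDegree ≤ 1 := by
      have h4 := natDegree_modByMonic_lt P φ.charpoly_monic hne1
      rw [hdim] at h4
      rw [hQ]
      omega
    have hQeq : Q = C (Q.coeff 1) * X + C (Q.coeff 0) :=
      eq_X_add_C_of_natDegree_le_one hdegQ
    have haval : (a : Matrix (Fin 2) (Fin 2) ℝ)
        = (Q.coeff 0) • (1 : Matrix (Fin 2) (Fin 2) ℝ) + (Q.coeff 1) • φ := by
      rw [← hP, Matrix.aeval_eq_aeval_mod_charpoly, ← hQ]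
      conv_lhs => rw [hQeq]
      simp only [map_add, map_mul, aeval_C, aeval_X]
      rw [Algebra.algebraMap_eq_smul_one, Algebra.algebraMap_eq_smul_one, smul_mul_assoc,
        one_mul, add_comm]
    refine ⟨![Q.coeff 0 + Q.coeff 1 * r, Q.coeff 1 * s,
      w 0 - (w 1 * s / φ 1 0) * ((φ 0 0 - r) / s), w 1 * s / φ 1 0], ?_⟩
    rw [hFapp]
    refine Prod.ext (Subtype.ext ?_) ?_
    · show _ = (a : Matrix (Fin 2) (Fin 2) ℝ)
      rw [haval]
      simp only [hf, Matrix.cons_val_zero, Matrix.cons_val_one, Matrix.head_cons]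
      have e0 : Q.coeff 0 + Q.coeff 1 * r - r * (Q.coeff 1 * s) / s = Q.coeff 0 := by
        field_simp
        ring
      have e1 : Q.coeff 1 * s / s = Q.coeff 1 := by field_simp
      rw [e0, e1]
    · funext i
      fin_cases i <;> simp [hf] <;> field_simp
  have hbij : Function.Bijective F := ⟨hinj, hsurj⟩
  refine ⟨(LinearEquiv.ofBijective F hbij).symm, ?_⟩
  intro u v
  set e := (LinearEquiv.ofBijective F hbij).symm with he
  have hu : F (e u) = u := (LinearEquiv.ofBijective F hbij).apply_symm_apply u
  have hv : F (e v) = v := (LinearEquiv.ofBijective F hbij).apply_symm_apply v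
  set x : Fin 4 → ℝ := e u with hx
  set y : Fin 4 → ℝ := e v with hy
  have key : ((0 : (Algebra.adjoin ℝ {φ} : Subalgebra ℝ (Matrix (Fin 2) (Fin 2) ℝ))), (u.1 : Matrix (Fin 2) (Fin 2) ℝ).mulVec v.2 -
      (v.1 : Matrix (Fin 2) (Fin 2) ℝ).mulVec u.2) =
      F ![0, 0,
        x 0 * y 2 - x 2 * y 0 - (x 1 * y 3 - x 3 * y 1),
        x 0 * y 3 - x 3 * y 0 + (x 1 * y 2 - x 2 * y 1)] := by
    rw [hFapp]
    refine Prod.ext (Subtype.ext ?_) ?_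
    · show (0 : Matrix (Fin 2) (Fin 2) ℝ) = _
      simp [hf]
    · rw [← hu, ← hv, hFapp, hFapp]
      funext i
      fin_cases i <;>
      · simp [hf, Matrix.mulVec, dotProduct, Fin.sum_univ_two, Matrix.one_apply]
        simp only [hq, hn]
        field_simp
        ring
  rw [key]
  exact (LinearEquiv.ofBijective F hbij).symm_apply_apply _
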